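/- Let A be a closed, densely defined operator on a complex Hilbert space H satisfying A*A = -A² (equality of unbounded operators including domains). Then A is skew-adjoint, i.e., A* = -A. -/

import Mathlib

open LinearPMap

set_option linter.unusedSectionVars false
set_option maxHeartbeats 1000000
set_option synthInstance.maxHeartbeats 200000

variable {H : Type*} [NormedAddCommGroup H] [InnerProductSpace ℂ H] [CompleteSpace H]

local notation "⟪" x ", " y "⟫" => (inner ℂ x y : ℂ)

noncomputable def LinearPMap.pcomp (g f : H →ₗ.[ℂ] H) : H →ₗ.[ℂ] H :=
  g.comp (f.domRestrict ((g.domain.comap f.toFun).map f.domain.subtype))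
    (fun x => by
      obtain ⟨hS, hD⟩ := x.2
      obtain ⟨y, hy, hyx⟩ := hS
      rw [LinearPMap.domRestrict_apply (y := y) hyx.symm]
      exact hy)

namespace Stmt18

theorem apply_congr {f : H →ₗ.[ℂ] H} {x y : f.domain} (h : (x : H) = (y : H)) : f x = f y := by
  rw [Subtype.ext h]

theorem eq_apply {f g : H →ₗ.[ℂ] H} (hfg : f = g) {x : f.domain} {y : g.domain}
    (hxy : (x : H) = (y : H)) : f x = g y := by
  subst hfg; exact apply_congr hxy

theorem papp_add (f : H →ₗ.[ℂ] H) {a b : H} (ha : a ∈ f.domain) (hb : b ∈ f.domain)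
    (hab : a + b ∈ f.domain) : f ⟨a + b, hab⟩ = f ⟨a, ha⟩ + f ⟨b, hb⟩ := by
  rw [show (⟨a + b, hab⟩ : f.domain) = ⟨a, ha⟩ + ⟨b, hb⟩ from rfl, f.map_add]

theorem papp_sub (f : H →ₗ.[ℂ] H) {a b : H} (ha : a ∈ f.domain) (hb : b ∈ f.domain)
    (hab : a - b ∈ f.domain) : f ⟨a - b, hab⟩ = f ⟨a, ha⟩ - f ⟨b, hb⟩ := by
  rw [show (⟨a - b, hab⟩ : f.domain) = ⟨a, ha⟩ - ⟨b, hb⟩ from rfl, f.map_sub]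

theorem mem_pcomp_domain {g f : H →ₗ.[ℂ] H} {x : H} :
    x ∈ (g.pcomp f).domain ↔ ∃ hx : x ∈ f.domain, f ⟨x, hx⟩ ∈ g.domain := by
  constructor
  · rintro ⟨⟨y, hy, rfl⟩, hxf⟩
    exact ⟨y.2, hy⟩
  · rintro ⟨hx, hfx⟩
    exact ⟨⟨⟨x, hx⟩, hfx, rfl⟩, hx⟩

theorem pcomp_apply {g f : H →ₗ.[ℂ] H} (x : (g.pcomp f).domain) (hx1 : (x : H) ∈ f.domain)
    (hx2 : f ⟨x, hx1⟩ ∈ g.domain) : (g.pcomp f) x = g ⟨f ⟨x, hx1⟩, hx2⟩ := by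
  have h1 : (f.domRestrict ((g.domain.comap f.toFun).map f.domain.subtype)) x = f ⟨x, hx1⟩ :=
    LinearPMap.domRestrict_apply rfl
  exact congrArg g.toFun (Subtype.ext h1)


theorem papp_neg (f : H →ₗ.[ℂ] H) {a : H} (ha : a ∈ f.domain) (ha' : -a ∈ f.domain) :
    f ⟨-a, ha'⟩ = -f ⟨a, ha⟩ := by
  rw [show (⟨-a, ha'⟩ : f.domain) = -⟨a, ha⟩ from rfl, f.map_neg]

/-- The Hilbert space `H ×₂ H`. -/
noncomputable def mk2 (a b : H) : WithLp 2 (H × H) := (WithLp.equiv 2 (H × H)).symm (a, b)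

theorem mk2_inner (a b c d : H) : ⟪mk2 a b, mk2 c d⟫ = ⟪a, c⟫ + ⟪b, d⟫ := by
  rw [WithLp.prod_inner_apply]
  rfl

theorem mk2_add (a b c d : H) : mk2 a b + mk2 c d = mk2 (a + c) (b + d) := rfl

theorem mk2_surj (p : WithLp 2 (H × H)) :
    ∃ a b, p = mk2 a b :=
  ⟨(WithLp.equiv 2 (H × H) p).1, (WithLp.equiv 2 (H × H) p).2,
    ((WithLp.equiv 2 (H × H)).symm_apply_apply p).symm⟩

theorem mk2_inj {a b c d : H} (hm : mk2 a b = mk2 c d) : a = c ∧ b = d := by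
  have := congrArg (WithLp.equiv 2 (H × H)) hm
  simp only [mk2, Equiv.apply_symm_apply, Prod.mk.injEq] at this
  exact this

section main

variable (A : H →ₗ.[ℂ] H)

/-- The graph of `A` inside `H ×₂ H`. -/
noncomputable def grA : Submodule ℂ (WithLp 2 (H × H)) :=
  A.graph.comap
    (((WithLp.prodContinuousLinearEquiv 2 ℂ H H).toLinearEquiv :
      WithLp 2 (H × H) ≃ₗ[ℂ] H × H) : WithLp 2 (H × H) →ₗ[ℂ] H × H)

theorem mem_grA {a b : H} : mk2 a b ∈ grA A ↔ (a, b) ∈ A.graph := by exact Iff.rfl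

theorem grA_closed (hclosed : A.IsClosed) : IsClosed (grA A : Set (WithLp 2 (H × H))) := by
  have he : (grA A : Set (WithLp 2 (H × H)))
      = (WithLp.prodContinuousLinearEquiv 2 ℂ H H) ⁻¹' (A.graph : Set (H × H)) := by exact rfl
  rw [he]
  exact hclosed.preimage (WithLp.prodContinuousLinearEquiv 2 ℂ H H).continuous


/-- The domain `D(A†A)`. -/
noncomputable abbrev Dom : Submodule ℂ H := (A.adjoint.pcomp A).domain

theorem memA {x : H} (hx : x ∈ Dom A) : x ∈ A.domain := by
  obtain ⟨h1, _⟩ := mem_pcomp_domain.mp hx; exact h1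

theorem memB {x : H} (hx : x ∈ Dom A) : A ⟨x, memA A hx⟩ ∈ A.adjoint.domain := by
  obtain ⟨h1, h2⟩ := mem_pcomp_domain.mp hx; exact h2

theorem hDA : Dom A ≤ A.domain := fun _ hx => memA A hx

variable {A}
variable (hsq : A.adjoint.pcomp A = -(A.pcomp A))

include hsq in
theorem hDeq : Dom A = (A.pcomp A).domain := by have := congrArg LinearPMap.domain hsq; exact this

include hsq in
theorem memA2 {x : H} (hx : x ∈ Dom A) : A ⟨x, memA A hx⟩ ∈ A.domain := by
  have hx' : x ∈ (A.pcomp A).domain := hDeq hsq ▸ hx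
  obtain ⟨h1, h2⟩ := mem_pcomp_domain.mp hx'
  exact h2

include hsq in
theorem hkey {x : H} (hx : x ∈ Dom A) :
    A.adjoint ⟨A ⟨x, memA A hx⟩, memB A hx⟩ = -A ⟨A ⟨x, memA A hx⟩, memA2 hsq hx⟩ := by
  have e1 : (A.adjoint.pcomp A) ⟨x, hx⟩ = A.adjoint ⟨A ⟨x, memA A hx⟩, memB A hx⟩ :=
    pcomp_apply _ _ _
  have e2 : (A.pcomp A) ⟨x, hDeq hsq ▸ hx⟩ = A ⟨A ⟨x, memA A hx⟩, memA2 hsq hx⟩ :=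
    pcomp_apply _ _ _
  have e3 : (A.adjoint.pcomp A) ⟨x, hx⟩ = (-(A.pcomp A)) ⟨x, hDeq hsq ▸ hx⟩ :=
    eq_apply hsq rfl
  rw [← e1, e3, LinearPMap.neg_apply, e2]

variable (A) in
/-- The operator `1 + A†A` on `D(A†A)` as a linear map into `H`. -/
noncomputable def NL : ↥(Dom A) →ₗ[ℂ] H := (Dom A).subtype + (A.adjoint.pcomp A).toFun

theorem NL_apply (x : Dom A) :
    NL A x = ↑x + A.adjoint ⟨A ⟨↑x, memA A x.2⟩, memB A x.2⟩ := by
  show ↑x + (A.adjoint.pcomp A) x = _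
  rw [pcomp_apply x (memA A x.2) (memB A x.2)]

include hsq in
theorem NL_apply' (x : Dom A) :
    NL A x = ↑x - A ⟨A ⟨↑x, memA A x.2⟩, memA2 hsq x.2⟩ := by
  rw [NL_apply, hkey hsq x.2, sub_eq_add_neg]

variable (hdense : Dense (A.domain : Set H))

include hdense in
theorem pairA (y : A.adjoint.domain) (x : A.domain) : ⟪A.adjoint y, ↑x⟫ = ⟪(y : H), A x⟫ :=
  A.adjoint_isFormalAdjoint hdense y x

include hdense in
theorem pairA' (x : A.domain) (y : A.adjoint.domain) : ⟪(x : H), A.adjoint y⟫ = ⟪A x, (y : H)⟫ := by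
  rw [← inner_conj_symm, pairA hdense, inner_conj_symm]

include hdense in
theorem inner_NL (x : Dom A) :
    ⟪NL A x, (x : H)⟫ = ((‖(x : H)‖ ^ 2 + ‖A ⟨↑x, memA A x.2⟩‖ ^ 2 : ℝ) : ℂ) := by
  rw [NL_apply, inner_add_left]
  have h2 : ⟪A.adjoint ⟨A ⟨↑x, memA A x.2⟩, memB A x.2⟩, (x : H)⟫
      = ⟪A ⟨↑x, memA A x.2⟩, A ⟨↑x, memA A x.2⟩⟫ := pairA hdense _ ⟨↑x, memA A x.2⟩
  rw [h2, inner_self_eq_norm_sq_to_K, inner_self_eq_norm_sq_to_K]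
  push_cast
  rfl

include hdense in
theorem NL_inj : Function.Injective (NL A) := by
  rw [injective_iff_map_eq_zero]
  intro x hx
  have h1 : ⟪NL A x, (x : H)⟫ = 0 := by rw [hx, inner_zero_left]
  rw [inner_NL hdense] at h1
  have h2 : (‖(x : H)‖ ^ 2 + ‖A ⟨↑x, memA A x.2⟩‖ ^ 2 : ℝ) = 0 := by exact_mod_cast h1
  have h3 : ‖(x : H)‖ ^ 2 = 0 := by nlinarith [sq_nonneg ‖(x : H)‖, sq_nonneg ‖A ⟨↑x, memA A x.2⟩‖]
  have : (x : H) = 0 := by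
    rwa [pow_eq_zero_iff two_ne_zero, norm_eq_zero] at h3
  exact Subtype.ext this

variable (hclosed : A.IsClosed)

include hdense hclosed in
theorem NL_surj : Function.Surjective (NL A) := by
  intro w
  haveI : CompleteSpace (grA A) := (grA_closed A hclosed).completeSpace_coe
  obtain ⟨p, hp, q, hq, hv⟩ := (grA A).exists_add_mem_mem_orthogonal (mk2 w 0)
  obtain ⟨a, b, rfl⟩ := mk2_surj p
  obtain ⟨u, v, rfl⟩ := mk2_surj q
  obtain ⟨ya, hya1, hya2⟩ := (A.mem_graph_iff).mp ((mem_grA A).mp hp)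
  have horth : ∀ x' : A.domain, ⟪(x' : H), u⟫ + ⟪A x', v⟫ = 0 := by
    intro x'
    have hmem : mk2 (x' : H) (A x') ∈ grA A := (mem_grA A).mpr (A.mem_graph x')
    have := (Submodule.mem_orthogonal _ _).mp hq _ hmem
    rwa [mk2_inner] at this
  have horth' : ∀ x' : A.domain, ⟪-u, (x' : H)⟫ = ⟪v, A x'⟫ := by
    intro x'
    have h1 := congrArg (starRingEnd ℂ) (horth x')
    simp only [_root_.map_add, inner_conj_symm, _root_.map_zero] at h1
    rw [inner_neg_left]
    linear_combination -h1
  have hvdom : v ∈ A.adjoint.domain := A.mem_adjoint_domain_of_exists v ⟨-u, horth'⟩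
  have hadj : A.adjoint ⟨v, hvdom⟩ = -u := adjoint_apply_eq hdense _ horth'
  have hcoord : a + u = w ∧ b + v = 0 := by
    rw [mk2_add] at hv
    exact mk2_inj hv.symm
  -- `a ∈ Dom A`
  have hya1' : (ya : H) = a := hya1
  have hya2' : A ya = b := hya2
  have haA : a ∈ A.domain := hya1' ▸ ya.2
  have hab : A ⟨a, haA⟩ = b := (apply_congr hya1'.symm).trans hya2'
  have hbv : b = -v := eq_neg_of_add_eq_zero_left hcoord.2
  have hbdom : A ⟨a, haA⟩ ∈ A.adjoint.domain := by
    rw [hab, hbv]; exact neg_mem hvdom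
  have haD : a ∈ Dom A := mem_pcomp_domain.mpr ⟨haA, hbdom⟩
  refine ⟨⟨a, haD⟩, ?_⟩
  rw [NL_apply]
  have e1 : A.adjoint ⟨A ⟨(⟨a, haD⟩ : Dom A), memA A haD⟩, memB A haD⟩
      = A.adjoint ⟨-v, neg_mem hvdom⟩ := by
    apply apply_congr
    show (A ⟨a, memA A haD⟩ : H) = -v
    rw [apply_congr (y := ⟨a, haA⟩) rfl, hab, hbv]
  rw [e1, papp_neg A.adjoint hvdom, hadj]
  show a + - -u = w
  rw [neg_neg]
  exact hcoord.1

include hdense hclosed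

/-- The resolvent-type equivalence `(1 + A†A)⁻¹ : H ≃ D(A†A)`. -/
noncomputable def Req : ↥(Dom A) ≃ₗ[ℂ] H :=
  LinearEquiv.ofBijective (NL A) ⟨NL_inj hdense, NL_surj hdense hclosed⟩

/-- `ρ = (1 + A†A)⁻¹` as a map `H → H`. -/
noncomputable def rho : H →ₗ[ℂ] H :=
  (Dom A).subtype ∘ₗ ((Req hdense hclosed).symm : H →ₗ[ℂ] ↥(Dom A))

/-- `σ = A (1 + A†A)⁻¹` as a map `H → H`. -/
noncomputable def sigma : H →ₗ[ℂ] H :=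
  A.toFun ∘ₗ (Submodule.inclusion (hDA A)) ∘ₗ ((Req hdense hclosed).symm : H →ₗ[ℂ] ↥(Dom A))

omit hdense hclosed

section rhosigma

local notation "R'" => LinearEquiv.symm (Req hdense hclosed)
local notation "ρ" => rho hdense hclosed
local notation "σ" => sigma hdense hclosed

include hdense hclosed

theorem NL_R (w : H) : NL A (R' w) = w := (Req hdense hclosed).apply_symm_apply w

theorem R_NL (x : Dom A) : R' (NL A x) = x := (Req hdense hclosed).symm_apply_apply x

theorem rho_def (w : H) : ρ w = ↑(R' w) := rfl

theorem memD_rho (w : H) : ρ w ∈ Dom A := (R' w).2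

theorem mem_rho_A (w : H) : ρ w ∈ A.domain := hDA A (memD_rho hdense hclosed w)

theorem sigma_def (w : H) {hm : ρ w ∈ A.domain} : σ w = A ⟨ρ w, hm⟩ := rfl

theorem mem_sigma_B (w : H) : σ w ∈ A.adjoint.domain := by
  have h1 : A ⟨↑(R' w), memA A (R' w).2⟩ = σ w := rfl
  exact h1 ▸ memB A (R' w).2

include hsq in
theorem mem_sigma_A (w : H) : σ w ∈ A.domain := by
  have h1 : A ⟨↑(R' w), memA A (R' w).2⟩ = σ w := rfl
  exact h1 ▸ memA2 hsq (R' w).2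

theorem hNR (w : H) : ρ w + A.adjoint ⟨σ w, mem_sigma_B hdense hclosed w⟩ = w := by
  have h1 := NL_apply (A := A) (R' w)
  rw [NL_R hdense hclosed w] at h1
  exact h1.symm

include hsq in
theorem hNR' (w : H) : ρ w - A ⟨σ w, mem_sigma_A hsq hdense hclosed w⟩ = w := by
  have h1 := NL_apply' hsq (A := A) (R' w)
  rw [NL_R hdense hclosed w] at h1
  exact h1.symm

include hsq in
theorem hA2 (w : H) : A ⟨σ w, mem_sigma_A hsq hdense hclosed w⟩ = ρ w - w :=
  (sub_sub_cancel (ρ w) _).symm.trans (by rw [hNR' hsq hdense hclosed w])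

theorem inner_rho_right (h k : H) : ⟪h, ρ k⟫ = ⟪ρ h, ρ k⟫ + ⟪σ h, σ k⟫ := by
  have e0 : ⟪h, ρ k⟫ = ⟪ρ h + A.adjoint ⟨σ h, mem_sigma_B hdense hclosed h⟩, ρ k⟫ := by
    rw [hNR hdense hclosed h]
  rw [e0, inner_add_left]
  congr 1
  have h2 : ⟪A.adjoint ⟨σ h, mem_sigma_B hdense hclosed h⟩, ((⟨ρ k, mem_rho_A hdense hclosed k⟩ : A.domain) : H)⟫
      = ⟪σ h, A ⟨ρ k, mem_rho_A hdense hclosed k⟩⟫ := pairA hdense _ _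
  exact h2

theorem inner_rho_left (h k : H) : ⟪ρ h, k⟫ = ⟪ρ h, ρ k⟫ + ⟪σ h, σ k⟫ := by
  have e0 : ⟪ρ h, k⟫ = ⟪ρ h, ρ k + A.adjoint ⟨σ k, mem_sigma_B hdense hclosed k⟩⟫ := by
    rw [hNR hdense hclosed k]
  rw [e0, inner_add_right]
  congr 1
  have h2 : ⟪((⟨ρ h, mem_rho_A hdense hclosed h⟩ : A.domain) : H), A.adjoint ⟨σ k, mem_sigma_B hdense hclosed k⟩⟫
      = ⟪A ⟨ρ h, mem_rho_A hdense hclosed h⟩, σ k⟫ := pairA' hdense _ _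
  exact h2

theorem rho_sym (h k : H) : ⟪ρ h, k⟫ = ⟪h, ρ k⟫ := by
  rw [inner_rho_left hdense hclosed h k, inner_rho_right hdense hclosed h k]

theorem inner_rho_self (w : H) : ⟪w, ρ w⟫ = ((‖ρ w‖ ^ 2 + ‖σ w‖ ^ 2 : ℝ) : ℂ) := by
  rw [inner_rho_right hdense hclosed, inner_self_eq_norm_sq_to_K, inner_self_eq_norm_sq_to_K]
  push_cast
  rfl

theorem inner_rho_self' (w : H) : ⟪ρ w, w⟫ = ((‖ρ w‖ ^ 2 + ‖σ w‖ ^ 2 : ℝ) : ℂ) := by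
  rw [rho_sym hdense hclosed, inner_rho_self hdense hclosed]

theorem rho_norm_le (w : H) : ‖ρ w‖ ≤ ‖w‖ := by
  have h1 : (‖ρ w‖ ^ 2 + ‖σ w‖ ^ 2 : ℝ) ≤ ‖w‖ * ‖ρ w‖ := by
    have h2 := norm_inner_le_norm (𝕜 := ℂ) w (ρ w)
    rw [inner_rho_self hdense hclosed, Complex.norm_real] at h2
    exact le_trans (le_abs_self _) h2
  by_contra hc
  push_neg at hc
  nlinarith [norm_nonneg (σ w), norm_nonneg w, norm_nonneg (ρ w)]

theorem sigma_norm_le (w : H) : ‖σ w‖ ≤ ‖w‖ := by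
  have h1 : (‖ρ w‖ ^ 2 + ‖σ w‖ ^ 2 : ℝ) ≤ ‖w‖ * ‖ρ w‖ := by
    have h2 := norm_inner_le_norm (𝕜 := ℂ) w (ρ w)
    rw [inner_rho_self hdense hclosed, Complex.norm_real] at h2
    exact le_trans (le_abs_self _) h2
  have h3 := rho_norm_le hdense hclosed w
  by_contra hc
  push_neg at hc
  nlinarith [norm_nonneg (σ w), norm_nonneg w, norm_nonneg (ρ w)]

theorem rho_cont : Continuous (rho hdense hclosed (A := A)) :=
  AddMonoidHomClass.continuous_of_bound _ 1 (fun w => by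
    simpa using rho_norm_le hdense hclosed w)

theorem sigma_cont : Continuous (sigma hdense hclosed (A := A)) :=
  AddMonoidHomClass.continuous_of_bound _ 1 (fun w => by
    simpa using sigma_norm_le hdense hclosed w)

theorem rho_NL (x : Dom A) : ρ (NL A x) = ↑x := congrArg Subtype.val (R_NL hdense hclosed x)

theorem sigma_NL (x : Dom A) : σ (NL A x) = A ⟨↑x, memA A x.2⟩ := by
  have h1 : σ (NL A x) = A ⟨ρ (NL A x), mem_rho_A hdense hclosed _⟩ := rfl
  rw [h1]
  exact apply_congr (rho_NL hdense hclosed x)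

include hsq in
theorem R_comm (x : A.domain) : ρ ((A x : H)) = σ (x : H) := by
  have hmem2 : A ⟨σ (x : H), mem_sigma_A hsq hdense hclosed (x : H)⟩ ∈ A.domain := by
    rw [hA2 hsq hdense hclosed]
    exact sub_mem (mem_rho_A hdense hclosed _) x.2
  have hmemD : σ (x : H) ∈ Dom A := by
    rw [hDeq hsq]
    exact mem_pcomp_domain.mpr ⟨mem_sigma_A hsq hdense hclosed (x : H), hmem2⟩
  have hNL : NL A ⟨σ (x : H), hmemD⟩ = (A x : H) := by
    rw [NL_apply' hsq]
    have e1 : A ⟨↑(⟨σ (x : H), hmemD⟩ : Dom A), memA A hmemD⟩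
        = A ⟨σ (x : H), mem_sigma_A hsq hdense hclosed (x : H)⟩ := apply_congr rfl
    have e2 : A ⟨A ⟨↑(⟨σ (x : H), hmemD⟩ : Dom A), memA A hmemD⟩, memA2 hsq hmemD⟩
        = A ⟨ρ (x : H) - (x : H), sub_mem (mem_rho_A hdense hclosed _) x.2⟩ :=
      apply_congr (e1.trans (hA2 hsq hdense hclosed (x : H)))
    rw [e2, papp_sub A (mem_rho_A hdense hclosed _) x.2]
    have e3 : A ⟨↑x, x.2⟩ = A x := apply_congr rfl
    have e4 : A ⟨ρ (x : H), mem_rho_A hdense hclosed _⟩ = σ (x : H) := rfl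
    rw [e3, e4]
    abel
  have h5 : R' ((A x : H)) = ⟨σ (x : H), hmemD⟩ := by
    apply (Req hdense hclosed).symm_apply_eq.mpr
    exact hNL.symm
  rw [rho_def hdense hclosed, h5]

include hsq in
theorem sr_comm (k : H) : σ (ρ k) = ρ (σ k) := by
  have h1 := R_comm hsq hdense hclosed ⟨ρ k, mem_rho_A hdense hclosed k⟩
  have e1 : A ⟨ρ k, mem_rho_A hdense hclosed k⟩ = σ k := rfl
  rw [e1] at h1
  exact h1.symm

include hsq in
theorem hF1 (h k : H) : ⟪σ h, k⟫ + ⟪h, σ k⟫ = ⟪σ h, ρ k⟫ + ⟪ρ h, σ k⟫ := by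
  have e1 : ⟪σ h, k⟫ = ⟪σ h, ρ k⟫ + ⟪σ h, A.adjoint ⟨σ k, mem_sigma_B hdense hclosed k⟩⟫ := by
    conv_lhs => rw [← hNR hdense hclosed k]
    rw [inner_add_right]
  have e2 : ⟪σ h, A.adjoint ⟨σ k, mem_sigma_B hdense hclosed k⟩⟫
      = ⟪A ⟨σ h, mem_sigma_A hsq hdense hclosed h⟩, σ k⟫ :=
    pairA' hdense ⟨σ h, mem_sigma_A hsq hdense hclosed h⟩ _
  rw [e1, e2, hA2 hsq hdense hclosed, inner_sub_left]
  ring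

include hsq in
theorem hF2 (h k : H) : ⟪σ (ρ h), k⟫ + ⟪ρ h, σ k⟫ = ⟪σ h, k⟫ + ⟪h, σ k⟫ := by
  rw [sr_comm hsq hdense hclosed, rho_sym hdense hclosed (σ h) k]
  exact (hF1 hsq hdense hclosed h k).symm

/-- `π = 1 - ρ`. -/
noncomputable def piL : H →ₗ[ℂ] H := LinearMap.id - rho hdense hclosed

theorem piL_apply (w : H) : piL hdense hclosed (A := A) w = w - ρ w := rfl

theorem piL_cont : Continuous (piL hdense hclosed (A := A)) :=
  continuous_id.sub (rho_cont hdense hclosed)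

theorem Mker_closed : IsClosed ((LinearMap.ker (piL hdense hclosed (A := A)) : Submodule ℂ H) : Set H) := by
  have : ((LinearMap.ker (piL hdense hclosed (A := A)) : Submodule ℂ H) : Set H)
      = (piL hdense hclosed (A := A)) ⁻¹' {0} := by
    ext x
    simp [LinearMap.mem_ker]
  rw [this]
  exact IsClosed.preimage (piL_cont hdense hclosed) isClosed_singleton

theorem mem_Mker {m : H} :
    m ∈ LinearMap.ker (piL hdense hclosed (A := A)) ↔ ρ m = m := by
  rw [LinearMap.mem_ker, piL_apply, sub_eq_zero, eq_comm]

theorem sigma_Mker {m : H} (hm : ρ m = m) : σ m = 0 := by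
  have h1 : A.adjoint ⟨σ m, mem_sigma_B hdense hclosed m⟩ = 0 := by
    have h2 := hNR hdense hclosed m
    rw [hm] at h2
    exact add_eq_left.mp h2
  have h3 : ⟪A.adjoint ⟨σ m, mem_sigma_B hdense hclosed m⟩,
      ((⟨ρ m, mem_rho_A hdense hclosed m⟩ : A.domain) : H)⟫
      = ⟪σ m, A ⟨ρ m, mem_rho_A hdense hclosed m⟩⟫ := pairA hdense _ _
  rw [h1, inner_zero_left] at h3
  have h4 : A ⟨ρ m, mem_rho_A hdense hclosed m⟩ = σ m := rfl
  rw [h4] at h3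
  exact inner_self_eq_zero.mp h3.symm

theorem Mker_eq_orth :
    LinearMap.ker (piL hdense hclosed (A := A))
      = (LinearMap.range (piL hdense hclosed (A := A)))ᗮ := by
  ext x
  rw [mem_Mker hdense hclosed, Submodule.mem_orthogonal]
  constructor
  · rintro hx u ⟨w, rfl⟩
    rw [piL_apply, inner_sub_left, rho_sym hdense hclosed, hx, sub_self]
  · intro hx
    have hA : ⟪x - ρ x, x⟫ = 0 := by
      have := hx (piL hdense hclosed x) ⟨x, rfl⟩
      rwa [piL_apply] at this
    have hB : ⟪ρ x - ρ (ρ x), x⟫ = 0 := by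
      have := hx (piL hdense hclosed (ρ x)) ⟨ρ x, rfl⟩
      rwa [piL_apply] at this
    have hC : ⟪x - ρ x, ρ x⟫ = 0 := by
      have e1 : ρ (x - ρ x) = ρ x - ρ (ρ x) := map_sub _ _ _
      have e2 := rho_sym hdense hclosed (x - ρ x) x
      rw [e1, hB] at e2
      exact e2.symm
    have h2 : ⟪x - ρ x, x - ρ x⟫ = 0 := by
      rw [inner_sub_right, hA, hC, sub_zero]
    have h3 : x - ρ x = 0 := inner_self_eq_zero.mp h2
    exact (sub_eq_zero.mp h3).symm

theorem vanish_of (f : H → ℂ) (hf : Continuous f)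
    (hsub : ∀ x y, f (x - y) = f x - f y)
    (hres : ∀ w, f (ρ w) = f w)
    (hker : ∀ m, ρ m = m → f m = 0) : ∀ w, f w = 0 := by
  have hclosedM := Mker_closed hdense hclosed (A := A)
  haveI : CompleteSpace (LinearMap.ker (piL hdense hclosed (A := A))) :=
    hclosedM.completeSpace_coe
  intro w
  obtain ⟨m, hm, m', hm', rfl⟩ :=
    (LinearMap.ker (piL hdense hclosed (A := A))).exists_add_mem_mem_orthogonal w
  have hfm : f m = 0 := hker m ((mem_Mker hdense hclosed).mp hm)
  have hfm' : f m' = 0 := by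
    have hZ : IsClosed {x : H | f x = 0} := isClosed_eq hf continuous_const
    have hsubset : (LinearMap.range (piL hdense hclosed (A := A)) : Set H) ⊆ {x : H | f x = 0} := by
      rintro u ⟨v, rfl⟩
      have : f (piL hdense hclosed v) = f v - f (ρ v) := by
        rw [piL_apply]; exact hsub v (ρ v)
      rw [Set.mem_setOf_eq, this, hres, sub_self]
    have hcl : (m' : H) ∈ closure ((LinearMap.range (piL hdense hclosed (A := A))) : Set H) := by
      have h5 : m' ∈ (LinearMap.range (piL hdense hclosed (A := A))).topologicalClosure := by
        rw [← Submodule.orthogonal_orthogonal_eq_closure, ← Mker_eq_orth hdense hclosed]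
        exact hm'
      exact h5
    exact closure_minimal hsubset hZ hcl
  have : f (m + m') = f m + f m' := by
    have := hsub (m + m') m'
    simp only [add_sub_cancel_right] at this
    linear_combination -this
  rw [this, hfm, hfm', add_zero]

include hsq in
theorem phi_zero {m : H} (hm : ρ m = m) : ∀ k, ⟪m, σ k⟫ = 0 := by
  apply vanish_of hdense hclosed
  · exact Continuous.inner continuous_const ((sigma_cont hdense hclosed))
  · intro x y
    rw [_root_.map_sub, inner_sub_right]
  · intro w
    rw [sr_comm hsq hdense hclosed, ← rho_sym hdense hclosed, hm]
  · intro k hk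
    rw [sigma_Mker hdense hclosed hk, inner_zero_right]

include hsq in
theorem Fzero (h k : H) : ⟪σ h, k⟫ + ⟪h, σ k⟫ = 0 := by
  revert h
  apply vanish_of hdense hclosed (f := fun h => ⟪σ h, k⟫ + ⟪h, σ k⟫)
  · exact Continuous.add
      (Continuous.inner (sigma_cont hdense hclosed) continuous_const)
      (Continuous.inner continuous_id continuous_const)
  · intro x y
    rw [_root_.map_sub, inner_sub_left, inner_sub_left]
    ring
  · intro w
    exact hF2 hsq hdense hclosed w k
  · intro m hm
    rw [sigma_Mker hdense hclosed hm, inner_zero_left, phi_zero hsq hdense hclosed hm k,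
      add_zero]

include hsq in
theorem skewD (x y : Dom A) :
    ⟪A ⟨↑x, memA A x.2⟩, (y : H)⟫ + ⟪(x : H), A ⟨↑y, memA A y.2⟩⟫ = 0 := by
  have h1 := Fzero hsq hdense hclosed (NL A x) (NL A y)
  rw [hF1 hsq hdense hclosed, sigma_NL hdense hclosed, sigma_NL hdense hclosed,
    rho_NL hdense hclosed, rho_NL hdense hclosed] at h1
  exact h1

include hsq in
theorem skewDA (x : Dom A) (v : A.domain) :
    ⟪A ⟨↑x, memA A x.2⟩, (v : H)⟫ + ⟪(x : H), A v⟫ = 0 := by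
  have t1 : ⟪A ⟨↑x, memA A x.2⟩, (v : H)⟫
      = ⟪A ⟨↑x, memA A x.2⟩, ρ (v : H)⟫
        + ⟪A ⟨A ⟨↑x, memA A x.2⟩, memA2 hsq x.2⟩, σ (v : H)⟫ := by
    have e0 : ⟪A ⟨↑x, memA A x.2⟩, (v : H)⟫
        = ⟪A ⟨↑x, memA A x.2⟩, ρ (v : H) + A.adjoint ⟨σ (v : H), mem_sigma_B hdense hclosed _⟩⟫ := by
      rw [hNR hdense hclosed]
    rw [e0, inner_add_right]
    congr 1
    exact pairA' hdense ⟨A ⟨↑x, memA A x.2⟩, memA2 hsq x.2⟩ _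
  have t2 : ⟪(x : H), A v⟫ = ⟪(x : H), σ (v : H)⟫
      - ⟪A ⟨A ⟨↑x, memA A x.2⟩, memA2 hsq x.2⟩, σ (v : H)⟫ := by
    have e1 : ⟪(x : H), A v⟫ = ⟪ρ (NL A x), A v⟫ := by rw [rho_NL hdense hclosed]
    have e2 : ⟪ρ (NL A x), (A v : H)⟫ = ⟪NL A x, ρ ((A v : H))⟫ := rho_sym hdense hclosed _ _
    have e3 : ρ ((A v : H)) = σ (v : H) := R_comm hsq hdense hclosed v
    have e4 : NL A x = ↑x - A ⟨A ⟨↑x, memA A x.2⟩, memA2 hsq x.2⟩ := NL_apply' hsq x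
    rw [e1, e2, e3, e4, inner_sub_left]
  have t3 : ⟪A ⟨↑x, memA A x.2⟩, ρ (v : H)⟫ + ⟪(x : H), σ (v : H)⟫ = 0 := by
    have h1 := skewD hsq hdense hclosed x (⟨ρ (v : H), memD_rho hdense hclosed _⟩ : Dom A)
    have e5 : A ⟨↑(⟨ρ (v : H), memD_rho hdense hclosed _⟩ : Dom A),
        memA A (memD_rho hdense hclosed _)⟩ = σ (v : H) := apply_congr rfl
    rw [e5] at h1
    exact h1
  rw [t1, t2]
  linear_combination t3

/-- The graph of the restriction of `A` to `D(A†A)`, inside `H ×₂ H`. -/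
noncomputable def jmap : ↥(Dom A) →ₗ[ℂ] WithLp 2 (H × H) :=
  (WithLp.linearEquiv 2 ℂ (H × H)).symm.toLinearMap ∘ₗ
    (LinearMap.prod (Dom A).subtype (A.toFun ∘ₗ Submodule.inclusion (hDA A)))

omit hdense hclosed in
theorem jmap_apply (x : Dom A) : jmap (A := A) x = mk2 ↑x (A ⟨↑x, memA A x.2⟩) := rfl

include hsq in
theorem grA_le_biorth : grA A ≤ (LinearMap.range (jmap (A := A)))ᗮᗮ := by
  set K := (LinearMap.range (jmap (A := A)))ᗮᗮ with hK
  intro g hg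
  haveI : CompleteSpace K := (Submodule.isClosed_orthogonal _).completeSpace_coe
  haveI : K.HasOrthogonalProjection := Submodule.HasOrthogonalProjection.ofCompleteSpace K
  obtain ⟨p, hp, q, hq, hpq⟩ := K.exists_add_mem_mem_orthogonal g
  have hsub0 : LinearMap.range (jmap (A := A)) ≤ grA A := by
    rintro u ⟨x, rfl⟩
    rw [jmap_apply, mem_grA]
    exact A.mem_graph ⟨↑x, memA A x.2⟩
  have hKsub : K ≤ grA A := by
    rw [hK, Submodule.orthogonal_orthogonal_eq_closure]
    exact Submodule.topologicalClosure_minimal _ hsub0 (grA_closed A hclosed)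
  have hKorth : Kᗮ = (LinearMap.range (jmap (A := A)))ᗮ := by
    refine le_antisymm (Submodule.orthogonal_le (Submodule.le_orthogonal_orthogonal _)) ?_
    exact Submodule.le_orthogonal_orthogonal _
  -- q = g - p ∈ grA ∩ (range jmap)ᗮ
  have hqgr : q ∈ grA A := by
    have : q = g - p := by rw [hpq]; abel
    rw [this]
    exact sub_mem hg (hKsub hp)
  have hqo : q ∈ (LinearMap.range (jmap (A := A)))ᗮ := hKorth ▸ hq
  -- show q = 0
  obtain ⟨qa, qb, rfl⟩ := mk2_surj q
  obtain ⟨ya, hya1, hya2⟩ := (A.mem_graph_iff).mp ((mem_grA A).mp hqgr)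
  have hya1' : (ya : H) = qa := hya1
  have hya2' : A ya = qb := hya2
  have horth : ∀ x : Dom A, ⟪(x : H), qa⟫ + ⟪A ⟨↑x, memA A x.2⟩, qb⟫ = 0 := by
    intro x
    have h1 := (Submodule.mem_orthogonal _ _).mp hqo (jmap x) ⟨x, rfl⟩
    rwa [jmap_apply, mk2_inner] at h1
  have h2 := horth ⟨ρ qa, memD_rho hdense hclosed qa⟩
  have e1 : A ⟨↑(⟨ρ qa, memD_rho hdense hclosed qa⟩ : Dom A),
      memA A (memD_rho hdense hclosed qa)⟩ = σ qa := rfl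
  rw [e1] at h2
  -- second term: ⟪σ qa, qb⟫ = ⟪ρ (A ya), A ya⟫ ≥ 0 (real)
  have e2 : σ qa = ρ ((A ya : H)) := by rw [R_comm hsq hdense hclosed ya, hya1']
  have h3 : ⟪ρ qa, qa⟫ + ⟪ρ ((A ya : H)), (A ya : H)⟫ = 0 := by
    rw [← e2, hya2']
    exact h2
  rw [inner_rho_self' hdense hclosed, inner_rho_self' hdense hclosed] at h3
  have h4 : ((‖ρ qa‖ ^ 2 + ‖σ qa‖ ^ 2 : ℝ) : ℂ)
      + ((‖ρ ((A ya : H))‖ ^ 2 + ‖σ ((A ya : H))‖ ^ 2 : ℝ) : ℂ) = 0 := h3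
  have h5 : (‖ρ qa‖ ^ 2 + ‖σ qa‖ ^ 2 : ℝ)
      + (‖ρ ((A ya : H))‖ ^ 2 + ‖σ ((A ya : H))‖ ^ 2 : ℝ) = 0 := by exact_mod_cast h4
  have h6 : ρ qa = 0 ∧ σ qa = 0 := by
    constructor <;>
    · rw [← norm_eq_zero]
      nlinarith [sq_nonneg ‖ρ qa‖, sq_nonneg ‖σ qa‖, sq_nonneg ‖ρ ((A ya : H))‖,
        sq_nonneg ‖σ ((A ya : H))‖, norm_nonneg (ρ qa), norm_nonneg (σ qa)]
  have hqa : qa = 0 := by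
    have h7 := hNR hdense hclosed qa
    rw [h6.1] at h7
    have h8 : A.adjoint ⟨σ qa, mem_sigma_B hdense hclosed qa⟩ = 0 := by
      have e3 : (⟨σ qa, mem_sigma_B hdense hclosed qa⟩ : A.adjoint.domain)
          = (0 : A.adjoint.domain) := Subtype.ext h6.2
      rw [e3]
      exact A.adjoint.toFun.map_zero
    rw [h8, zero_add] at h7
    exact h7.symm
  have hqb : qb = 0 := by
    have hya0 : ya = 0 := Subtype.ext (by rw [hya1', hqa]; simp)
    rw [← hya2', hya0]
    exact A.toFun.map_zero
  have hq0 : (mk2 qa qb : WithLp 2 (H × H)) = 0 := by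
    rw [hqa, hqb]
    rfl
  rw [hpq, hq0, add_zero]
  exact hp

include hsq in
theorem skewAA (u v : A.domain) : ⟪A u, (v : H)⟫ + ⟪(u : H), A v⟫ = 0 := by
  have hm : mk2 (A v) ↑v ∈ (LinearMap.range (jmap (A := A)))ᗮ := by
    rw [Submodule.mem_orthogonal]
    rintro w ⟨x, rfl⟩
    rw [jmap_apply, mk2_inner]
    have h1 := skewDA hsq hdense hclosed x v
    linear_combination h1
  have hg : mk2 ↑u (A u) ∈ (LinearMap.range (jmap (A := A)))ᗮᗮ :=
    grA_le_biorth hsq hdense hclosed ((mem_grA A).mpr (A.mem_graph u))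
  have h2 := (Submodule.mem_orthogonal _ _).mp hg (mk2 (A v) ↑v) hm
  rw [mk2_inner] at h2
  have h3 := congrArg (starRingEnd ℂ) h2
  simp only [_root_.map_add, inner_conj_symm, _root_.map_zero] at h3
  linear_combination h3

include hsq in
theorem negA_le : -A ≤ A.adjoint := by
  have hfa : A.IsFormalAdjoint (-A) := by
    intro x y
    rw [LinearPMap.neg_apply, inner_neg_right]
    have h1 := skewAA hsq hdense hclosed x y
    linear_combination h1
  exact hfa.le_adjoint hdense

include hsq in
theorem surjA1 : ∀ u : H, ∃ v : A.domain, (v : H) + A v = u := by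
  intro u
  have hv : ρ u - σ u ∈ A.domain :=
    sub_mem (mem_rho_A hdense hclosed u) (mem_sigma_A hsq hdense hclosed u)
  refine ⟨⟨ρ u - σ u, hv⟩, ?_⟩
  have e1 : A ⟨ρ u - σ u, hv⟩
      = A ⟨ρ u, mem_rho_A hdense hclosed u⟩ - A ⟨σ u, mem_sigma_A hsq hdense hclosed u⟩ :=
    papp_sub A _ _ _
  have e2 : A ⟨ρ u, mem_rho_A hdense hclosed u⟩ = σ u := rfl
  rw [e1, e2, hA2 hsq hdense hclosed]
  show ρ u - σ u + (σ u - (ρ u - u)) = u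
  abel

include hsq in
theorem adj_dom_le : A.adjoint.domain ≤ A.domain := by
  intro y hy
  set t := y + A.adjoint ⟨y, hy⟩ with ht
  have hx : ρ t + σ t ∈ A.domain :=
    add_mem (mem_rho_A hdense hclosed t) (mem_sigma_A hsq hdense hclosed t)
  set x := ρ t + σ t with hxd
  have hxadj : x ∈ A.adjoint.domain := (negA_le hsq hdense hclosed).1 hx
  have valx : A.adjoint ⟨x, hxadj⟩ = -(A ⟨x, hx⟩) := by
    have h1 := (negA_le hsq hdense hclosed).2 (x := ⟨x, hx⟩) (y := ⟨x, hxadj⟩) rfl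
    rw [LinearPMap.neg_apply] at h1
    exact h1.symm
  have hAx : A ⟨x, hx⟩ = σ t + (ρ t - t) := by
    have e1 : A ⟨x, hx⟩ = A ⟨ρ t, mem_rho_A hdense hclosed t⟩
        + A ⟨σ t, mem_sigma_A hsq hdense hclosed t⟩ := papp_add A _ _ _
    have e2 : A ⟨ρ t, mem_rho_A hdense hclosed t⟩ = σ t := rfl
    rw [e1, e2, hA2 hsq hdense hclosed]
  have hkey2 : x + A.adjoint ⟨x, hxadj⟩ = t := by
    rw [valx, hAx, hxd]
    abel
  have hwdom : y - x ∈ A.adjoint.domain := sub_mem hy hxadj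
  have hBw : A.adjoint ⟨y - x, hwdom⟩ = -(y - x) := by
    have e3 : A.adjoint ⟨y - x, hwdom⟩ = A.adjoint ⟨y, hy⟩ - A.adjoint ⟨x, hxadj⟩ :=
      papp_sub A.adjoint _ _ _
    rw [e3]
    have e4 : A.adjoint ⟨y, hy⟩ = t - y := by rw [ht]; abel
    have e5 : A.adjoint ⟨x, hxadj⟩ = t - x := by
      have := hkey2
      have e6 : A.adjoint ⟨x, hxadj⟩ = (x + A.adjoint ⟨x, hxadj⟩) - x := by abel
      rw [e6, hkey2]
    rw [e4, e5]
    abel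
  have hperp : ∀ v : A.domain, ⟪y - x, (v : H) + A v⟫ = 0 := by
    intro v
    have h1 : ⟪A.adjoint ⟨y - x, hwdom⟩, (v : H)⟫ = ⟪y - x, A v⟫ := pairA hdense _ _
    rw [hBw, inner_neg_left] at h1
    rw [inner_add_right]
    linear_combination -h1
  have hw0 : y - x = 0 := by
    obtain ⟨v, hv⟩ := surjA1 hsq hdense hclosed (y - x)
    have := hperp v
    rw [hv] at this
    exact inner_self_eq_zero.mp this
  have : y = x := by
    have := sub_eq_zero.mp hw0
    exact this
  rw [this]
  exact hx

end rhosigma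

end main

end Stmt18

theorem stmt18 (A : H →ₗ.[ℂ] H) (hdense : Dense (A.domain : Set H)) (hclosed : A.IsClosed)
    (h : A.adjoint.pcomp A = -(A.pcomp A)) : A.adjoint = -A := by
  have hle1 : -A ≤ A.adjoint := Stmt18.negA_le h hdense hclosed
  have hdom : A.adjoint.domain ≤ (-A).domain := Stmt18.adj_dom_le h hdense hclosed
  have hle2 : A.adjoint ≤ -A := by
    refine ⟨hdom, ?_⟩
    intro x y hxy
    exact (hle1.2 (x := y) (y := x) hxy.symm).symm
  exact le_antisymm hle2 hle1
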